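/- Let M = [[A, B], [C, D]] ∈ ℂ^{2n×2n} where A and D are *-DMP. If BC = 0, CB = 0, CA = DC, AC* = C*D, and ∑_{i=1}^{m} A^{m−i} B D^{i−1} D^π = 0 and ∑_{i=1}^{m} A^{i−1} A^π B D^{m−i} = 0 for some m ≥ max{i(A), i(D)}, then M is *-DMP. -/

import Mathlib

/-- Moore–Penrose inverse. -/
def IsMP {A : Type*} [Ring A] [StarRing A] (a x : A) : Prop :=
  a * x * a = a ∧ x * a * x = x ∧ star (a * x) = a * x ∧ star (x * a) = x * a

/-- Group inverse. -/
def IsGroupInv {A : Type*} [Ring A] (a x : A) : Prop :=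
  a * x * a = a ∧ x * a * x = x ∧ a * x = x * a

/-- `a` is *-DMP: some power `a ^ n` (`n ≥ 1`) has a common Moore–Penrose and group inverse. -/
def IsStarDMP {A : Type*} [Ring A] [StarRing A] (a : A) : Prop :=
  ∃ n : ℕ, 1 ≤ n ∧ ∃ x : A, IsMP (a ^ n) x ∧ IsGroupInv (a ^ n) x

/-- `x` is the Drazin inverse of `a` (with some index `k`). -/
def IsDrazin {A : Type*} [Ring A] (a x : A) : Prop :=
  ∃ k : ℕ, x * a ^ (k + 1) = a ^ k ∧ a * x ^ 2 = x ∧ a * x = x * a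

/-- `x` is the pseudo core inverse of `a`. -/
def IsPCore {A : Type*} [Ring A] [StarRing A] (a x : A) : Prop :=
  ∃ k : ℕ, x * a ^ (k + 1) = a ^ k ∧ a * x ^ 2 = x ∧ star (a * x) = a * x

/-- EP element: common group and Moore–Penrose inverse. -/
def IsEP {A : Type*} [Ring A] [StarRing A] (a : A) : Prop :=
  ∃ x : A, IsMP a x ∧ IsGroupInv a x



section RingLemmas

variable {R : Type*} [Ring R]

/-- powers of an idempotent -/
private lemma sdmp_idem_pow {e : R} (he : e * e = e) : ∀ j : ℕ, e ^ (j + 1) = e := by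
  intro j
  induction j with
  | zero => simp
  | succ j ih => rw [pow_succ, ih, he]

private lemma sdmp_proj_comm {e p : R} (hc : e * p = p * e) : (1 - e) * p = p * (1 - e) := by
  rw [sub_mul, mul_sub, one_mul, mul_one, hc]

private lemma sdmp_proj_idem {e : R} (he : e * e = e) : (1 - e) * (1 - e) = 1 - e := by
  rw [mul_sub, mul_one, sub_mul, one_mul, he, sub_self, sub_zero]

/-- `((1-e) * p) ^ (j+1) = (1-e) * p^(j+1)` for an idempotent `e` commuting with `p`. -/
private lemma sdmp_proj_mul_pow {e p : R} (he : e * e = e) (hc : e * p = p * e) :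
    ∀ j : ℕ, ((1 - e) * p) ^ (j + 1) = (1 - e) * p ^ (j + 1) := by
  have hfp : Commute (1 - e) p := sdmp_proj_comm hc
  intro j
  induction j with
  | zero => simp
  | succ j ih =>
    rw [pow_succ, ih, mul_assoc, ← mul_assoc (p ^ (j+1)) (1-e) p, ← (hfp.pow_right (j+1)).eq,
      ← mul_assoc, ← mul_assoc, sdmp_proj_idem he, mul_assoc, ← pow_succ]

/-- `(p+q)^(s+s) = 0` when `q*p = 0` and `p^s = q^s = 0`. -/
private lemma sdmp_nilp_qp {p q : R} {s : ℕ} (hqp : q * p = 0) (hp : p ^ s = 0)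
    (hq : q ^ s = 0) : (p + q) ^ (s + s) = 0 := by
  have claim1 : ∀ j : ℕ, q * (p + q) ^ j = q ^ (j + 1) := by
    intro j
    induction j with
    | zero => simp
    | succ j ih =>
      have hz : q ^ (j + 1) * p = 0 := by
        rw [pow_succ, mul_assoc, hqp, mul_zero]
      rw [pow_succ, ← mul_assoc, ih, mul_add, hz, zero_add, ← pow_succ]
  have claim2 : ∀ t : ℕ, (p + q) ^ (s + t) = p ^ t * (p + q) ^ s := by
    intro t
    induction t with
    | zero => simp
    | succ t ih =>
      rw [show s + (t+1) = (s+t) + 1 from rfl, pow_succ', ih, add_mul]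
      rcases t with _ | t
      · simp only [pow_zero, one_mul] at ih ⊢
        rw [claim1, pow_succ, hq, zero_mul, add_zero, pow_one]
      · have hz : q * (p ^ (t+1) * (p + q) ^ s) = 0 := by
          rw [← mul_assoc, pow_succ' p t, ← mul_assoc, hqp, zero_mul, zero_mul]
        rw [hz, add_zero, ← mul_assoc, ← pow_succ']
  rw [claim2 s, hp, zero_mul]

/-- `(p+q)^(s+2) = 0` when `p,q` commute, `p^(s+1) = 0`, `q*q = 0`. -/
private lemma sdmp_nilp_comm {p q : R} {s : ℕ} (hc : p * q = q * p) (hp : p ^ (s + 1) = 0)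
    (hq : q * q = 0) : (p + q) ^ (s + 2) = 0 := by
  have hcc : Commute p q := hc
  rw [hcc.add_pow]
  apply Finset.sum_eq_zero
  intro k hk
  by_cases hks : s + 1 ≤ k
  · have : p ^ k = 0 := by
      have : p ^ k = p ^ (s+1) * p ^ (k - (s+1)) := by
        rw [← pow_add]; congr 1; omega
      rw [this, hp, zero_mul]
    rw [this, zero_mul, zero_mul]
  · have h2 : q ^ (s + 2 - k) = 0 := by
      have : q ^ (s + 2 - k) = q * q * q ^ (s - k) := by
        rw [← pow_two, ← pow_add]; congr 1; omega
      rw [this, hq, zero_mul]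
    rw [h2, mul_zero, zero_mul]

variable {a z y x b : R}

/-- extended Drazin equation -/
private lemma sdmp_drazin_ext (h1 : z * a ^ (k + 1) = a ^ k) :
    ∀ t : ℕ, z * a ^ (k + 1 + t) = a ^ (k + t) := by
  intro t
  rw [pow_add, ← mul_assoc, h1, ← pow_add]

private lemma sdmp_az_red (h2 : a * z ^ 2 = z) : ∀ t : ℕ, a * z ^ (t + 2) = z ^ (t + 1) := by
  intro t
  rw [show t + 2 = 2 + t from by omega, pow_add, ← mul_assoc, h2, ← pow_succ']

private lemma sdmp_pow_az (h2 : a * z ^ 2 = z) :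
    ∀ j : ℕ, a ^ (j + 1) * z ^ (j + 1) = a * z := by
  intro j
  induction j with
  | zero => simp
  | succ j ih =>
    have hr := sdmp_az_red h2 j
    rw [show j + 2 = j + 1 + 1 from rfl] at hr
    rw [pow_succ a (j+1), mul_assoc, hr, ih]

private lemma sdmp_ay_pow (h2 : a * z ^ 2 = z) : ∀ j : ℕ, a ^ j * z ^ (j + 1) = z := by
  intro j
  induction j with
  | zero => simp
  | succ j ih =>
    have hr := sdmp_az_red h2 j
    rw [show j + 2 = j + 1 + 1 from rfl] at hr
    rw [pow_succ a j, mul_assoc, hr, ih]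

end RingLemmas
section DrazinLemmas

variable {R : Type*} [Ring R]

/-- From a Drazin-type system with a self-adjoint spectral projection, conclude *-DMP. -/
private lemma sdmp_wrap [StarRing R] (a z : R) (k : ℕ) (h1 : z * a ^ (k + 1) = a ^ k)
    (h2 : a * z ^ 2 = z) (h3 : a * z = z * a) (h4 : star (a * z) = a * z) :
    IsStarDMP a := by
  have hcz : Commute z a := h3.symm
  have hpow : a ^ (k + 1) * z ^ (k + 1) = a * z := sdmp_pow_az h2 k
  have hee : (a * z) * (a * z) = a * z := by
    have h2' : a ^ 2 * z ^ 2 = a * z := by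
      have := sdmp_pow_az h2 1; simpa using this
    calc (a * z) * (a * z) = a * (z * a) * z := by noncomm_ring
      _ = a * (a * z) * z := by rw [← h3]
      _ = a ^ 2 * z ^ 2 := by noncomm_ring
      _ = a * z := h2'
  have hxa : z ^ (k + 1) * a ^ (k + 1) = a * z := by
    rw [← hcz.mul_pow, ← h3, sdmp_idem_pow hee k]
  have heow : a ^ (k+1) * z ^ (k+1) * a ^ (k+1) = a ^ (k+1) := by
    rw [hpow, mul_assoc, h1, ← pow_succ']
  have hmp2 : z ^ (k+1) * a ^ (k+1) * z ^ (k+1) = z ^ (k+1) := by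
    have hr := sdmp_az_red h2 k
    rw [show k + 2 = k + 1 + 1 from rfl] at hr
    rw [hxa, mul_assoc, ← pow_succ', hr]
  refine ⟨k + 1, by omega, z ^ (k + 1), ⟨heow, hmp2, ?_, ?_⟩, heow, hmp2, ?_⟩
  · rw [hpow]; exact h4
  · rw [hxa]; exact h4
  · rw [hpow, hxa]

/-- Uniqueness of the Drazin inverse. -/
private lemma sdmp_unique {a y z : R} (hy : IsDrazin a y) (hz : IsDrazin a z) : y = z := by
  obtain ⟨k1, hy1, hy2, hy3⟩ := hy
  obtain ⟨k2, hz1, hz2, hz3⟩ := hz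
  set k := k1 + k2 with hk
  have hcy : Commute y a := hy3.symm
  have hcz : Commute z a := hz3.symm
  have hy1' : y * a ^ (k + 1) = a ^ k := by
    have := sdmp_drazin_ext hy1 (t := k2)
    rw [show k1 + 1 + k2 = k + 1 from by omega, show k1 + k2 = k from rfl] at this
    exact this
  have hz1' : z * a ^ (k + 1) = a ^ k := by
    have := sdmp_drazin_ext hz1 (t := k1)
    rw [show k2 + 1 + k1 = k + 1 from by omega, show k2 + k1 = k from by omega] at this
    exact this
  have hyy : a ^ k * y ^ (k + 1) = y := sdmp_ay_pow hy2 k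
  have hzz : a ^ k * z ^ (k + 1) = z := sdmp_ay_pow hz2 k
  -- y = y * (a * z)
  have hya_idem : (y * a) * (y * a) = y * a := by
    calc (y * a) * (y * a) = y * (a * y) * a := by noncomm_ring
      _ = y * (y * a) * a := by rw [hy3]
      _ = y ^ 2 * a ^ 2 := by noncomm_ring
      _ = a ^ 2 * y ^ 2 := (hcy.pow_pow 2 2).eq
      _ = a * (a * y ^ 2) := by rw [pow_two, mul_assoc]
      _ = a * y := by rw [hy2]
      _ = y * a := hy3
  have step1 : y = y * (a * z) := by
    have e1 : y = y ^ (k+1) * a ^ k := by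
      rw [(hcy.pow_pow (k+1) k).eq, hyy]
    calc y = y ^ (k+1) * a ^ k := e1
      _ = y ^ (k+1) * (z * a ^ (k+1)) := by rw [hz1']
      _ = y ^ (k+1) * (a ^ (k+1) * z) := by rw [(hcz.pow_right (k+1)).eq]
      _ = (y * a) ^ (k+1) * z := by rw [← mul_assoc, ← (hcy.mul_pow (k+1))]
      _ = (y * a) * z := by rw [sdmp_idem_pow hya_idem k]
      _ = y * (a * z) := by rw [mul_assoc]
  have step2 : z = y * (a * z) := by
    have haz_idem : (a * z) * (a * z) = a * z := by
      calc (a * z) * (a * z) = a * (z * a) * z := by noncomm_ring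
        _ = a * (a * z) * z := by rw [← hz3]
        _ = a ^ 2 * z ^ 2 := by noncomm_ring
        _ = a * z := by simpa using sdmp_pow_az hz2 1
    calc z = a ^ k * z ^ (k+1) := hzz.symm
      _ = (y * a ^ (k+1)) * z ^ (k+1) := by rw [hy1']
      _ = y * (a ^ (k+1) * z ^ (k+1)) := by rw [mul_assoc]
      _ = y * (a * z) ^ (k+1) := by rw [(hcz.symm.mul_pow (k+1))]
      _ = y * (a * z) := by rw [sdmp_idem_pow haz_idem k]
  rw [step1, ← step2]

/-- Intertwining: `x * a = b * x` implies `x * a^D = b^D * x`. -/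
private lemma sdmp_intertwine {x a b y z : R} (hxa : x * a = b * x)
    (hy : IsDrazin a y) (hz : IsDrazin b z) : x * y = z * x := by
  obtain ⟨k1, hy1, hy2, hy3⟩ := hy
  obtain ⟨k2, hz1, hz2, hz3⟩ := hz
  set k := k1 + k2 + 1 with hk
  have hcy : Commute y a := hy3.symm
  have hcz : Commute z b := hz3.symm
  have hxk : ∀ j : ℕ, x * a ^ j = b ^ j * x := by
    intro j
    induction j with
    | zero => simp
    | succ j ih => rw [pow_succ, ← mul_assoc, ih, mul_assoc, hxa, ← mul_assoc, ← pow_succ]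
  have hya : y * a ^ (k + 1) = a ^ k := by
    have := sdmp_drazin_ext hy1 (t := k2 + 1)
    rw [show k1 + 1 + (k2 + 1) = k + 1 from by omega, show k1 + (k2+1) = k from by omega] at this
    exact this
  have hzb : z * b ^ (k + 1) = b ^ k := by
    have := sdmp_drazin_ext hz1 (t := k1 + 1)
    rw [show k2 + 1 + (k1 + 1) = k + 1 from by omega, show k2 + (k1+1) = k from by omega] at this
    exact this
  have hay : a * y = a ^ k * y ^ k := by
    rcases k with _ | k'
    · omega
    · exact (sdmp_pow_az hy2 k').symm
  have hbz : b * z = b ^ k * z ^ k := by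
    rcases k with _ | k'
    · omega
    · exact (sdmp_pow_az hz2 k').symm
  have step1 : (b * z) * (x * (a * y)) = x * (a * y) := by
    have e1 : x * (a * y) = b ^ k * (x * y ^ k) := by
      rw [hay, ← mul_assoc, hxk k, mul_assoc]
    have hb : b * z * b ^ k = b ^ k := by
      rw [hz3, mul_assoc, ← pow_succ', hzb]
    rw [e1, ← mul_assoc, hb]
  have step2 : (b * z) * x = x * (a * y) := by
    have e2 : (b * z) * x = z ^ k * (x * a ^ k) := by
      rw [hbz, (hcz.pow_pow k k).symm.eq, mul_assoc, hxk k, ← mul_assoc, mul_assoc]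
    have e3 : ((b * z) * x) * (a * y) = (b * z) * x := by
      rw [e2, mul_assoc, mul_assoc, ← mul_assoc (a ^ k) a y, ← pow_succ, (hcy.pow_right (k+1)).symm.eq, hya]
    rw [← e3, mul_assoc, step1]
  -- final
  have hzbz : z * b * z = z := by
    rw [← hz3, mul_assoc, ← pow_two, hz2]
  have final : z * x = x * y := by
    calc z * x = z * b * z * x := by rw [hzbz]
      _ = z * (b * (z * x)) := by rw [mul_assoc, mul_assoc]
      _ = z * ((b * z) * x) := by rw [← mul_assoc b z x]
      _ = z * (x * (a * y)) := by rw [step2]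
      _ = z * ((x * a) * y) := by rw [← mul_assoc x a y]
      _ = z * ((b * x) * y) := by rw [hxa]
      _ = ((z * b) * x) * y := by rw [← mul_assoc, ← mul_assoc]
      _ = ((b * z) * x) * y := by rw [← hz3]
      _ = (x * (a * y)) * y := by rw [step2]
      _ = x * (a * (y * y)) := by rw [mul_assoc, mul_assoc]
      _ = x * (a * y ^ 2) := by rw [← pow_two]
      _ = x * y := by rw [hy2]
  exact final.symm

end DrazinLemmas
section MoreLemmas

variable {R : Type*} [Ring R]

/-- Power of a Drazin invertible element with its power Drazin inverse. -/
private lemma sdmp_pow_drazin {a y : R} (hy : IsDrazin a y) {s : ℕ} (hs : 1 ≤ s) :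
    IsDrazin (a ^ s) (y ^ s) := by
  obtain ⟨k, h1, h2, h3⟩ := hy
  have hcy : Commute y a := h3.symm
  refine ⟨k, ?_, ?_, ?_⟩
  · have hshift : ∀ j N : ℕ, k ≤ N → y ^ j * a ^ (N + j) = a ^ N := by
      intro j
      induction j with
      | zero => intro N _; simp
      | succ j ih =>
        intro N hN
        have hstep : y * a ^ (N + j + 1) = a ^ (N + j) := by
          have := sdmp_drazin_ext h1 (t := N + j - k)
          rw [show k + 1 + (N + j - k) = N + j + 1 from by omega,
            show k + (N + j - k) = N + j from by omega] at this
          exact this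
        rw [pow_succ, mul_assoc, show N + (j+1) = N + j + 1 from by omega, hstep, ih N hN]
    have := hshift s (s * k) (Nat.le_mul_of_pos_left k hs)
    rw [← pow_mul, ← pow_mul, show s * (k+1) = s * k + s from by ring, this]
  · have hred : ∀ j t : ℕ, 1 ≤ t → a ^ j * y ^ (t + j) = y ^ t := by
      intro j
      induction j with
      | zero => intro t _; simp
      | succ j ih =>
        intro t ht
        have hstep : a * y ^ (t + j + 1) = y ^ (t + j) := by
          have := sdmp_az_red h2 (t + j - 1)
          rw [show t + j - 1 + 2 = t + j + 1 from by omega,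
            show t + j - 1 + 1 = t + j from by omega] at this
          exact this
        rw [pow_succ a j, mul_assoc, show t + (j+1) = t + j + 1 from by omega, hstep, ih t ht]
    have := hred s s hs
    rw [← pow_mul, show s * 2 = s + s from by ring, this]
  · exact ((hcy.symm.pow_pow s s)).eq

/-- For a *-DMP element, the spectral projection of any Drazin inverse is self-adjoint. -/
private lemma sdmp_star_proj [StarRing R] {a y : R} (ha : IsStarDMP a) (hy : IsDrazin a y) :
    star (a * y) = a * y := by
  obtain ⟨s, hs, x, hMP, hGp⟩ := ha
  have hxd : IsDrazin (a ^ s) x := by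
    refine ⟨1, ?_, ?_, hGp.2.2⟩
    · rw [pow_one, pow_two, ← mul_assoc, ← hGp.2.2, hGp.1]
    · rw [pow_two, ← mul_assoc, hGp.2.2, hGp.2.1]
  have hyd : IsDrazin (a ^ s) (y ^ s) := sdmp_pow_drazin hy hs
  have hxy : x = y ^ s := sdmp_unique hxd hyd
  obtain ⟨s', rfl⟩ : ∃ s', s = s' + 1 := ⟨s - 1, by omega⟩
  have hay : a * y = a ^ (s' + 1) * y ^ (s' + 1) := (sdmp_pow_az hy.choose_spec.2.1 s').symm
  rw [hay, ← hxy]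
  exact hMP.2.2.1

/-- Sum over `Icc 1 m` as a sum over `range m`. -/
private lemma sdmp_icc_sum {M : Type*} [AddCommMonoid M] (f : ℕ → M) (m : ℕ) :
    ∑ i ∈ Finset.Icc 1 m, f i = ∑ j ∈ Finset.range m, f (j + 1) := by
  induction m with
  | zero => simp
  | succ m ih => rw [Finset.sum_range_succ, ← ih, Finset.sum_Icc_succ_top (by omega)]

private lemma sdmp_telescope (g : ℕ → R) (m : ℕ) (h0 : ∑ j ∈ Finset.range m, g j = 0)
    (h1 : ∑ j ∈ Finset.range m, g (j + 1) = 0) (hm : g m = 0) : g 0 = 0 := by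
  have e1 := Finset.sum_range_succ g m
  have e2 := Finset.sum_range_succ' g m
  rw [e1, h0, h1, hm, zero_add, zero_add] at e2
  exact e2.symm

private lemma sdmp_dpowdd {d dd : R} (hd2 : d * dd ^ 2 = dd) :
    ∀ t r : ℕ, d ^ t * dd ^ (t + r + 1) = dd ^ (r + 1) := by
  intro t
  induction t with
  | zero => intro r; simp
  | succ t ih =>
    intro r
    have key : d * dd ^ (r + 2) = dd ^ (r + 1) := sdmp_az_red hd2 r
    have := ih (r + 1)
    rw [show t + (r+1) + 1 = t + 1 + r + 1 from by omega] at this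
    rw [pow_succ' d t, mul_assoc, this, key]

private lemma sdmp_adpow {a ad : R} (ha3 : a * ad = ad * a) (had2 : a * ad ^ 2 = ad) :
    ∀ t r : ℕ, ad ^ (t + r + 1) * a ^ t = ad ^ (r + 1) := by
  intro t
  induction t with
  | zero => intro r; simp
  | succ t ih =>
    intro r
    have key : ad ^ (r + 2) * a = ad ^ (r + 1) := by
      calc ad ^ (r + 2) * a = ad ^ r * (ad * (ad * a)) := by
            rw [show r + 2 = r + 1 + 1 from rfl, pow_succ, pow_succ, mul_assoc, mul_assoc]
        _ = ad ^ r * (ad * (a * ad)) := by rw [ha3]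
        _ = ad ^ r * ((ad * a) * ad) := by rw [← mul_assoc ad a ad]
        _ = ad ^ r * ((a * ad) * ad) := by rw [← ha3]
        _ = ad ^ r * (a * ad ^ 2) := by rw [mul_assoc, ← pow_two]
        _ = ad ^ r * ad := by rw [had2]
        _ = ad ^ (r + 1) := by rw [← pow_succ]
    have := ih (r + 1)
    rw [show t + (r+1) + 1 = t + 1 + r + 1 from by omega] at this
    rw [pow_succ a t, ← mul_assoc, this, key]

/-- `(1 - a*ad) * a^(m+t) = 0` given `ad * a^(m+1) = a^m`. -/
private lemma sdmp_pi_pow {a ad : R} (ha3 : a * ad = ad * a) (ham : ad * a ^ (m + 1) = a ^ m) :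
    ∀ t : ℕ, (1 - a * ad) * a ^ (m + t) = 0 := by
  have base : (1 - a * ad) * a ^ m = 0 := by
    rw [sub_mul, one_mul, ha3, mul_assoc, ← pow_succ', ham, sub_self]
  intro t
  rw [pow_add, ← mul_assoc, base, zero_mul]

end MoreLemmas
section KeyLemmas

variable {R : Type*} [Ring R]

/-- From the second sum condition: `(1 - a*ad) * b * dd = 0`. -/
private lemma sdmp_key2 {a ad b d dd : R} {m : ℕ} (ha3 : a * ad = ad * a)
    (ham : ad * a ^ (m + 1) = a ^ m) (hd2 : d * dd ^ 2 = dd)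
    (hS : ∑ i ∈ Finset.Icc 1 m, a ^ (i - 1) * (1 - a * ad) * b * d ^ (m - i) = 0) :
    (1 - a * ad) * b * dd = 0 := by
  set π : R := 1 - a * ad with hπ
  set g : ℕ → R := fun j => a ^ j * π * b * dd ^ (j + 1) with hg
  have hS' : ∑ j ∈ Finset.range m, a ^ j * π * b * d ^ (m - (j + 1)) = 0 := by
    rw [← hS, sdmp_icc_sum (fun i => a ^ (i - 1) * (1 - a * ad) * b * d ^ (m - i)) m]
    simp [hπ]
  have hT : ∑ j ∈ Finset.range m, g j = 0 := by
    have h0 : ∑ j ∈ Finset.range m, (a ^ j * π * b * d ^ (m - (j + 1))) * dd ^ m = 0 := by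
      rw [← Finset.sum_mul, hS', zero_mul]
    rw [← h0]
    apply Finset.sum_congr rfl
    intro j hj
    have hj' : j < m := Finset.mem_range.mp hj
    have hd := sdmp_dpowdd hd2 (m - (j + 1)) j
    rw [show m - (j + 1) + j + 1 = m from by omega] at hd
    rw [hg, mul_assoc (a ^ j * π * b) (d ^ (m - (j+1))) (dd ^ m), hd]
  have hT2 : ∑ j ∈ Finset.range m, g (j + 1) = 0 := by
    have h0 : ∑ j ∈ Finset.range m, a * g j * dd = 0 := by
      rw [← Finset.sum_mul, ← Finset.mul_sum, hT, mul_zero, zero_mul]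
    rw [← h0]
    apply Finset.sum_congr rfl
    intro j _
    simp only [hg]
    rw [← mul_assoc, ← mul_assoc, ← mul_assoc, ← pow_succ', mul_assoc, mul_assoc, mul_assoc,
      ← pow_succ]
    rw [← mul_assoc, ← mul_assoc]
  have hgm : g m = 0 := by
    have hc : Commute a ad := ha3
    have : a ^ m * π = 0 := by
      have h := sdmp_pi_pow ha3 ham 0
      rw [add_zero] at h
      calc a ^ m * π = a ^ m * 1 - a ^ m * (a * ad) := by rw [hπ, mul_sub]
        _ = a ^ m - a ^ (m+1) * ad := by rw [mul_one, ← mul_assoc, ← pow_succ]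
        _ = a ^ m - ad * a ^ (m+1) := by
            rw [(hc.pow_left (m+1)).eq]
        _ = 0 := by rw [ham, sub_self]
    simp only [hg]
    rw [this, zero_mul, zero_mul]
  have := sdmp_telescope g m hT hT2 hgm
  simpa [hg] using this

end KeyLemmas
section KeyLemmas2

variable {R : Type*} [Ring R]

/-- From the first sum condition: `ad * b * (1 - d*dd) = 0`. -/
private lemma sdmp_key1 {a ad b d dd : R} {m : ℕ} (ha3 : a * ad = ad * a)
    (had2 : a * ad ^ 2 = ad) (hd3 : d * dd = dd * d) (hdm : dd * d ^ (m + 1) = d ^ m)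
    (hS : ∑ i ∈ Finset.Icc 1 m, a ^ (m - i) * b * d ^ (i - 1) * (1 - d * dd) = 0) :
    ad * b * (1 - d * dd) = 0 := by
  set ρ : R := 1 - d * dd with hρ
  set g : ℕ → R := fun j => ad ^ (j + 1) * b * d ^ j * ρ with hg
  have hS' : ∑ j ∈ Finset.range m, a ^ (m - (j + 1)) * b * d ^ j * ρ = 0 := by
    rw [← hS, sdmp_icc_sum (fun i => a ^ (m - i) * b * d ^ (i - 1) * (1 - d * dd)) m]
    simp [hρ]
  have hT : ∑ j ∈ Finset.range m, g j = 0 := by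
    have h0 : ∑ j ∈ Finset.range m, ad ^ m * (a ^ (m - (j + 1)) * b * d ^ j * ρ) = 0 := by
      rw [← Finset.mul_sum, hS', mul_zero]
    rw [← h0]
    apply Finset.sum_congr rfl
    intro j hj
    have hj' : j < m := Finset.mem_range.mp hj
    have hd := sdmp_adpow ha3 had2 (m - (j + 1)) j
    rw [show m - (j + 1) + j + 1 = m from by omega] at hd
    simp only [hg]
    rw [← mul_assoc, ← mul_assoc, ← mul_assoc, hd]
  have hρd : ρ * d = d * ρ := by
    rw [hρ, sub_mul, mul_sub, one_mul, mul_one, mul_assoc, ← hd3, ← mul_assoc]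
  have hT2 : ∑ j ∈ Finset.range m, g (j + 1) = 0 := by
    have h0 : ∑ j ∈ Finset.range m, ad * g j * d = 0 := by
      rw [← Finset.sum_mul, ← Finset.mul_sum, hT, mul_zero, zero_mul]
    rw [← h0]
    apply Finset.sum_congr rfl
    intro j _
    simp only [hg]
    rw [← mul_assoc, ← mul_assoc, ← mul_assoc, ← pow_succ']
    rw [mul_assoc (ad ^ (j+1+1) * b * d ^ j) ρ d, hρd, ← mul_assoc, mul_assoc
      (ad ^ (j+1+1) * b) (d ^ j) d, ← pow_succ]
  have hgm : g m = 0 := by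
    have hc : Commute d dd := hd3
    have hzero : d ^ m * ρ = 0 := by
      calc d ^ m * ρ = d ^ m * 1 - d ^ m * (d * dd) := by rw [hρ, mul_sub]
        _ = d ^ m - d ^ (m+1) * dd := by rw [mul_one, ← mul_assoc, ← pow_succ]
        _ = d ^ m - dd * d ^ (m+1) := by rw [(hc.pow_left (m+1)).eq]
        _ = 0 := by rw [hdm, sub_self]
    simp only [hg]
    rw [mul_assoc (ad ^ (m+1) * b) (d ^ m) ρ, hzero, mul_zero]
  have := sdmp_telescope g m hT hT2 hgm
  simpa [hg] using this

/-- Drazin equation from nilpotency of the "core complement". -/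
private lemma sdmp_index_of_nilpotent {p z0 : R} {K : ℕ} (h2 : p * z0 ^ 2 = z0)
    (h3 : p * z0 = z0 * p) (hN : (p - z0 * (p * p)) ^ (K + 1) = 0) :
    z0 * p ^ (K + 2) = p ^ (K + 1) := by
  have hz2p : z0 ^ 2 * p = z0 := by
    rw [pow_two, mul_assoc, ← h3, ← mul_assoc, ← h3, mul_assoc, ← pow_two, h2]
  have he : (z0 * p) * (z0 * p) = z0 * p := by
    rw [mul_assoc, ← mul_assoc p z0 p, h3, ← mul_assoc, ← mul_assoc, ← pow_two, hz2p]
  have hep : (z0 * p) * p = p * (z0 * p) := by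
    rw [← mul_assoc, ← h3, mul_assoc]
  have hNN : p - z0 * (p * p) = (1 - z0 * p) * p := by
    rw [sub_mul, one_mul, mul_assoc]
  rw [hNN] at hN
  have hstep := sdmp_proj_mul_pow he hep K
  have hzero : (1 - z0 * p) * p ^ (K + 1) = 0 := by rw [← hstep, hN]
  rw [sub_mul, one_mul] at hzero
  have hproj : p ^ (K + 1) = z0 * p * p ^ (K + 1) := sub_eq_zero.mp hzero
  conv_rhs => rw [hproj, mul_assoc, ← pow_succ']

end KeyLemmas2
section Master

variable {R : Type*} [Ring R]

/-- Main abstract lemma: a commuting square-zero perturbation of a *-DMP-like Drazin system. -/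
private lemma sdmp_master [StarRing R] (p q z0 : R) (K : ℕ)
    (h1 : z0 * p ^ (K + 2) = p ^ (K + 1)) (h2 : p * z0 ^ 2 = z0) (h3 : p * z0 = z0 * p)
    (hq2 : q * q = 0) (hpq : p * q = q * p) (hqz : q * z0 = z0 * q)
    (hstar : star (p * z0) = p * z0) : IsStarDMP (p + q) := by
  set z : R := z0 - z0 ^ 2 * q with hzdef
  have hz2p : z0 ^ 2 * p = z0 := by
    rw [pow_two, mul_assoc, ← h3, ← mul_assoc, ← h3, mul_assoc, ← pow_two, h2]
  have hq2z : q * z0 ^ 2 = z0 ^ 2 * q := by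
    rw [pow_two, ← mul_assoc, hqz, mul_assoc, hqz, ← mul_assoc]
  have hMz : (p + q) * z = p * z0 := by
    rw [hzdef, add_mul, mul_sub, mul_sub, ← mul_assoc p (z0 ^ 2) q, h2,
      ← mul_assoc q (z0 ^ 2) q, hq2z, mul_assoc, hq2, mul_zero, sub_zero, hqz]
    abel
  have hzM : z * (p + q) = p * z0 := by
    rw [hzdef, mul_add, sub_mul, sub_mul, mul_assoc (z0 ^ 2) q p, ← hpq,
      ← mul_assoc (z0 ^ 2) p q, hz2p, mul_assoc (z0 ^ 2) q q, hq2, mul_zero, sub_zero, ← h3]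
    abel
  have hz0cube : (p * z0) * (z0 ^ 2 * q) = z0 ^ 2 * q := by
    have hc : z0 * z0 ^ 2 = z0 ^ 2 * z0 := by
      rw [← pow_succ']; exact pow_succ z0 2
    rw [← mul_assoc, mul_assoc p z0 (z0 ^ 2), hc, ← mul_assoc, h2, ← pow_two]
  have hMz2 : (p + q) * z ^ 2 = z := by
    rw [pow_two, ← mul_assoc, hMz, hzdef, mul_sub, hz0cube, mul_assoc, ← pow_two, h2]
  have he : (p * z0) * (p * z0) = p * z0 := by
    rw [mul_assoc, ← mul_assoc z0 p z0, ← h3, mul_assoc, ← pow_two, h2]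
  have hec_p : (p * z0) * p = p * (p * z0) := by
    rw [mul_assoc, ← h3]
  have hec_q : (p * z0) * q = q * (p * z0) := by
    rw [mul_assoc, ← hqz, ← mul_assoc, hpq, mul_assoc]
  have hec_M : (p * z0) * (p + q) = (p + q) * (p * z0) := by
    rw [mul_add, add_mul, hec_p, hec_q]
  have hp'K : ((1 - p * z0) * p) ^ (K + 1) = 0 := by
    rw [sdmp_proj_mul_pow he hec_p K, sub_mul, one_mul, h3, mul_assoc, ← pow_succ',
      show K + 1 + 1 = K + 2 from rfl, h1, sub_self]
  have hswap : ∀ u v : R, (p * z0) * u = u * (p * z0) →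
      ((1 - p * z0) * u) * ((1 - p * z0) * v)
      = ((1 - p * z0) * (1 - p * z0)) * (u * v) := by
    intro u v hu
    rw [mul_assoc, ← mul_assoc u (1 - p * z0) v, ← sdmp_proj_comm hu, ← mul_assoc,
      ← mul_assoc, mul_assoc ((1 - p * z0) * (1 - p * z0)) u v]
  have hq'2 : ((1 - p * z0) * q) * ((1 - p * z0) * q) = 0 := by
    rw [hswap q q hec_q, hq2, mul_zero]
  have hcomm' : ((1 - p * z0) * p) * ((1 - p * z0) * q)
      = ((1 - p * z0) * q) * ((1 - p * z0) * p) := by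
    rw [hswap p q hec_p, hswap q p hec_q, hpq]
  have hnil : ((1 - p * z0) * (p + q)) ^ (K + 2) = 0 := by
    rw [mul_add]
    exact sdmp_nilp_comm hcomm' hp'K hq'2
  have hMpow : (1 - p * z0) * (p + q) ^ (K + 2) = 0 := by
    have := sdmp_proj_mul_pow he hec_M (K + 1)
    rw [show K + 1 + 1 = K + 2 from rfl] at this
    rw [← this, hnil]
  have heM : (p * z0) * (p + q) ^ (K + 2) = (p + q) ^ (K + 2) := by
    rw [sub_mul, one_mul] at hMpow
    exact (sub_eq_zero.mp hMpow).symm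
  have hfinal1 : z * (p + q) ^ (K + 2 + 1) = (p + q) ^ (K + 2) := by
    rw [pow_succ' (p + q) (K + 2), ← mul_assoc, hzM, heM]
  refine sdmp_wrap (p + q) z (K + 2) hfinal1 hMz2 (hMz.trans hzM.symm) ?_
  rw [hMz]
  exact hstar

end Master
section MatrixLemmas

variable {n : ℕ}

private lemma sdmp_fromBlocks_sub (a b c d a' b' c' d' : Matrix (Fin n) (Fin n) ℂ) :
    Matrix.fromBlocks a b c d - Matrix.fromBlocks a' b' c' d'
      = Matrix.fromBlocks (a - a') (b - b') (c - c') (d - d') := by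
  rw [sub_eq_add_neg, Matrix.fromBlocks_neg, Matrix.fromBlocks_add]
  simp [sub_eq_add_neg]

private lemma sdmp_up_pow (a b : Matrix (Fin n) (Fin n) ℂ) :
    ∀ j : ℕ, (Matrix.fromBlocks a b 0 0 : Matrix (Fin n ⊕ Fin n) (Fin n ⊕ Fin n) ℂ) ^ (j + 1)
      = Matrix.fromBlocks (a ^ (j + 1)) (a ^ j * b) 0 0 := by
  intro j
  induction j with
  | zero => simp
  | succ j ih =>
    rw [pow_succ, ih, Matrix.fromBlocks_multiply]
    simp [pow_succ]

private lemma sdmp_low_pow (d : Matrix (Fin n) (Fin n) ℂ) :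
    ∀ j : ℕ, (Matrix.fromBlocks 0 0 0 d : Matrix (Fin n ⊕ Fin n) (Fin n ⊕ Fin n) ℂ) ^ (j + 1)
      = Matrix.fromBlocks 0 0 0 (d ^ (j + 1)) := by
  intro j
  induction j with
  | zero => simp
  | succ j ih =>
    rw [pow_succ, ih, Matrix.fromBlocks_multiply]
    simp [pow_succ]

end MatrixLemmas

variable {A : Type*} [NormedRing A] [StarRing A] [NormedAlgebra ℂ A] [CompleteSpace A]

theorem stmt15 {n : ℕ} (A B C D AD DD : Matrix (Fin n) (Fin n) ℂ)
    (hA : IsStarDMP A) (hD : IsStarDMP D)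
    (hAD : IsDrazin A AD) (hDD : IsDrazin D DD)
    (h1 : B * C = 0) (h2 : C * B = 0)
    (h3 : C * A = D * C) (h4 : A * star C = star C * D)
    (h5 : ∃ m : ℕ, AD * A ^ (m + 1) = A ^ m ∧ DD * D ^ (m + 1) = D ^ m ∧
      (∑ i ∈ Finset.Icc 1 m, A ^ (m - i) * B * D ^ (i - 1) * (1 - D * DD)) = 0 ∧
      (∑ i ∈ Finset.Icc 1 m, A ^ (i - 1) * (1 - A * AD) * B * D ^ (m - i)) = 0) :
    IsStarDMP (Matrix.fromBlocks A B C D) := by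
  obtain ⟨m, hAm, hDm, hS1, hS2⟩ := h5
  obtain ⟨kA, hA1, hA2, hA3⟩ := id hAD
  obtain ⟨kD, hD1, hD2, hD3⟩ := id hDD
  have hA2' : A * AD * AD = AD := by rw [mul_assoc, ← pow_two]; exact hA2
  have hD2' : D * DD * DD = DD := by rw [mul_assoc, ← pow_two]; exact hD2
  have hsA : star (A * AD) = A * AD := sdmp_star_proj hA hAD
  have hsD : star (D * DD) = D * DD := sdmp_star_proj hD hDD
  have hint : C * AD = DD * C := sdmp_intertwine h3 hAD hDD
  have G2 : (1 - A * AD) * B * DD = 0 := sdmp_key2 hA3 hAm hD2 hS2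
  have G1 : AD * B * (1 - D * DD) = 0 := sdmp_key1 hA3 hA2 hD3 hDm hS1
  -- notation for the blocks
  have hG2' : B * DD = A * AD * B * DD := by
    rw [sub_mul, sub_mul, one_mul, sub_eq_zero] at G2
    exact G2
  have hG1' : AD * B = AD * B * (D * DD) := by
    rw [mul_sub, mul_one, sub_eq_zero] at G1
    exact G1
  -- P * Z0
  have hPZ0 : Matrix.fromBlocks A B 0 D * Matrix.fromBlocks AD (-(AD * B * DD)) 0 DD
      = Matrix.fromBlocks (A * AD) 0 0 (D * DD) := by
    rw [Matrix.fromBlocks_multiply]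
    have hTR : A * -(AD * B * DD) + B * DD = 0 := by
      rw [mul_neg, ← mul_assoc, ← mul_assoc, ← hG2', neg_add_cancel]
    simp only [mul_zero, zero_mul, add_zero, zero_add, hTR]
  have hZ0P : Matrix.fromBlocks AD (-(AD * B * DD)) 0 DD * Matrix.fromBlocks A B 0 D
      = Matrix.fromBlocks (A * AD) 0 0 (D * DD) := by
    rw [Matrix.fromBlocks_multiply]
    have hTR : AD * B + -(AD * B * DD) * D = 0 := by
      rw [neg_mul, mul_assoc (AD * B) DD D, ← hD3, ← hG1', add_neg_cancel]
    simp only [mul_zero, zero_mul, add_zero, zero_add, hTR, ← hA3, ← hD3]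
  have hcommPZ : Matrix.fromBlocks A B 0 D * Matrix.fromBlocks AD (-(AD * B * DD)) 0 DD
      = Matrix.fromBlocks AD (-(AD * B * DD)) 0 DD * Matrix.fromBlocks A B 0 D :=
    hPZ0.trans hZ0P.symm
  have hPZ02 : Matrix.fromBlocks A B 0 D * Matrix.fromBlocks AD (-(AD * B * DD)) 0 DD ^ 2
      = Matrix.fromBlocks AD (-(AD * B * DD)) 0 DD := by
    rw [pow_two, ← mul_assoc, hPZ0, Matrix.fromBlocks_multiply]
    have hTR : A * AD * -(AD * B * DD) = -(AD * B * DD) := by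
      rw [mul_neg, ← mul_assoc, ← mul_assoc, hA2']
    simp only [mul_zero, zero_mul, add_zero, zero_add, hTR, hA2', hD2']
  -- the nilpotent part
  have hEP : Matrix.fromBlocks (A * AD) 0 0 (D * DD) * Matrix.fromBlocks A B 0 D
      = Matrix.fromBlocks (A * AD * A) (A * AD * B) 0 (D * DD * D) := by
    rw [Matrix.fromBlocks_multiply]
    simp only [mul_zero, zero_mul, add_zero, zero_add]
  have hsub : Matrix.fromBlocks A B 0 D -
      Matrix.fromBlocks AD (-(AD * B * DD)) 0 DD *
        (Matrix.fromBlocks A B 0 D * Matrix.fromBlocks A B 0 D)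
      = Matrix.fromBlocks (A - A * AD * A) (B - A * AD * B) 0 0
        + Matrix.fromBlocks 0 0 0 (D - D * DD * D) := by
    rw [← mul_assoc, hZ0P, hEP, sdmp_fromBlocks_sub, Matrix.fromBlocks_add]
    simp
  have hπA : ∀ t : ℕ, (1 - A * AD) * A ^ (m + t) = 0 := sdmp_pi_pow hA3 hAm
  have hπD : ∀ t : ℕ, (1 - D * DD) * D ^ (m + t) = 0 := sdmp_pi_pow hD3 hDm
  have heA : (A * AD) * (A * AD) = A * AD := by
    rw [mul_assoc, ← mul_assoc AD A AD, ← hA3, mul_assoc, ← pow_two, hA2]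
  have heD : (D * DD) * (D * DD) = D * DD := by
    rw [mul_assoc, ← mul_assoc DD D DD, ← hD3, mul_assoc, ← pow_two, hD2]
  have hecA : (A * AD) * A = A * (A * AD) := by rw [mul_assoc, ← hA3]
  have hecD : (D * DD) * D = D * (D * DD) := by rw [mul_assoc, ← hD3]
  have ha1 : A - A * AD * A = (1 - A * AD) * A := by rw [sub_mul, one_mul]
  have hb1 : B - A * AD * B = (1 - A * AD) * B := by rw [sub_mul, one_mul]
  have hd1 : D - D * DD * D = (1 - D * DD) * D := by rw [sub_mul, one_mul]
  have hppow : (Matrix.fromBlocks (A - A * AD * A) (B - A * AD * B) 0 0 :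
      Matrix (Fin n ⊕ Fin n) (Fin n ⊕ Fin n) ℂ) ^ (m + 1) = 0 := by
    rw [ha1, hb1, sdmp_up_pow]
    have e1 : ((1 - A * AD) * A) ^ (m + 1) = 0 := by
      rw [sdmp_proj_mul_pow heA hecA m]
      have := hπA 1
      rwa [show m + 1 = m + 1 from rfl] at this
    have e2 : ((1 - A * AD) * A) ^ m * ((1 - A * AD) * B) = 0 := by
      rcases m with _ | t
      · have h0 : (1 : Matrix (Fin n) (Fin n) ℂ) - A * AD = 0 := by
          have := hπA 0
          simpa using this
        rw [pow_zero, one_mul, h0, zero_mul]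
      · rw [sdmp_proj_mul_pow heA hecA t]
        have h0 : (1 - A * AD) * A ^ (t + 1) = 0 := by
          have := hπA 0
          rwa [add_zero] at this
        rw [h0, zero_mul]
    rw [e1, e2, Matrix.fromBlocks_zero]
  have hqpow : (Matrix.fromBlocks 0 0 0 (D - D * DD * D) :
      Matrix (Fin n ⊕ Fin n) (Fin n ⊕ Fin n) ℂ) ^ (m + 1) = 0 := by
    rw [hd1, sdmp_low_pow]
    have e1 : ((1 - D * DD) * D) ^ (m + 1) = 0 := by
      rw [sdmp_proj_mul_pow heD hecD m]
      exact hπD 1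
    rw [e1, Matrix.fromBlocks_zero]
  have hqp : (Matrix.fromBlocks 0 0 0 (D - D * DD * D) :
        Matrix (Fin n ⊕ Fin n) (Fin n ⊕ Fin n) ℂ) *
      Matrix.fromBlocks (A - A * AD * A) (B - A * AD * B) 0 0 = 0 := by
    rw [Matrix.fromBlocks_multiply]
    simp
  have hN : (Matrix.fromBlocks A B 0 D -
      Matrix.fromBlocks AD (-(AD * B * DD)) 0 DD *
        (Matrix.fromBlocks A B 0 D * Matrix.fromBlocks A B 0 D)) ^ (2 * m + 1 + 1) = 0 := by
    rw [hsub, show 2 * m + 1 + 1 = (m + 1) + (m + 1) from by omega]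
    exact sdmp_nilp_qp hqp hppow hqpow
  have hdrz : Matrix.fromBlocks AD (-(AD * B * DD)) 0 DD *
        Matrix.fromBlocks A B 0 D ^ (2 * m + 1 + 2)
      = Matrix.fromBlocks A B 0 D ^ (2 * m + 1 + 1) :=
    sdmp_index_of_nilpotent hPZ02 hcommPZ hN
  -- hypotheses about Q
  have hQ2 : (Matrix.fromBlocks 0 0 C 0 : Matrix (Fin n ⊕ Fin n) (Fin n ⊕ Fin n) ℂ) *
      Matrix.fromBlocks 0 0 C 0 = 0 := by
    rw [Matrix.fromBlocks_multiply]
    simp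
  have hPQ : Matrix.fromBlocks A B 0 D * Matrix.fromBlocks 0 0 C 0
      = Matrix.fromBlocks 0 0 C 0 * Matrix.fromBlocks A B 0 D := by
    rw [Matrix.fromBlocks_multiply, Matrix.fromBlocks_multiply]
    simp only [mul_zero, zero_mul, add_zero, zero_add, h1, h2, h3]
  have hQZ0 : Matrix.fromBlocks 0 0 C 0 * Matrix.fromBlocks AD (-(AD * B * DD)) 0 DD
      = Matrix.fromBlocks AD (-(AD * B * DD)) 0 DD * Matrix.fromBlocks 0 0 C 0 := by
    rw [Matrix.fromBlocks_multiply, Matrix.fromBlocks_multiply]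
    have hCX : C * -(AD * B * DD) = 0 := by
      rw [mul_neg, ← mul_assoc, ← mul_assoc, hint, mul_assoc DD C B, h2, mul_zero, zero_mul,
        neg_zero]
    have hXC : -(AD * B * DD) * C = 0 := by
      rw [neg_mul, mul_assoc (AD * B) DD C, ← hint, ← mul_assoc, mul_assoc AD B C, h1,
        mul_zero, zero_mul, neg_zero]
    simp only [mul_zero, zero_mul, add_zero, zero_add, hCX, hXC, hint]
  have hstarPZ : star (Matrix.fromBlocks A B 0 D * Matrix.fromBlocks AD (-(AD * B * DD)) 0 DD)
      = Matrix.fromBlocks A B 0 D * Matrix.fromBlocks AD (-(AD * B * DD)) 0 DD := by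
    rw [hPZ0, Matrix.star_eq_conjTranspose, Matrix.fromBlocks_conjTranspose]
    rw [Matrix.star_eq_conjTranspose] at hsA hsD
    simp only [Matrix.conjTranspose_zero, hsA, hsD]
  have hmain : IsStarDMP (Matrix.fromBlocks A B 0 D + Matrix.fromBlocks 0 0 C 0) :=
    sdmp_master (Matrix.fromBlocks A B 0 D) (Matrix.fromBlocks 0 0 C 0)
      (Matrix.fromBlocks AD (-(AD * B * DD)) 0 DD) (2 * m + 1)
      hdrz hPZ02 hcommPZ hQ2 hPQ hQZ0 hstarPZ
  have hsplit : Matrix.fromBlocks A B C D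
      = Matrix.fromBlocks A B 0 D + Matrix.fromBlocks 0 0 C 0 := by
    rw [Matrix.fromBlocks_add]
    simp
  rw [hsplit]
  exact hmain
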